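/- For any ε ≥ 0 and any 1 ≤ k ≤ n, the randomized-response selection mechanism RR : {0,1}^n → [n]^k with flip probability 1/(1+e^ε) is (ε, 0)-differentially private: for any two inputs x, x' ∈ {0,1}^n differing in exactly one coordinate and any set T of outputs, Pr[RR(x) ∈ T] ≤ e^ε · Pr[RR(x') ∈ T]. -/

import Mathlib

open MeasureTheory

/-- The probability that a sample from the PMF `μ` lands in the set `T`. -/
noncomputable def prob {α : Type*} (μ : PMF α) (T : Set α) : ℝ :=
  (μ.toOuterMeasure T).toReal

/-- Two inputs are neighbors if they differ in exactly one coordinate. -/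
def Neighbors {Z : Type*} {n : ℕ} (x x' : Fin n → Z) : Prop :=
  ∃ i, x i ≠ x' i ∧ ∀ j, j ≠ i → x j = x' j

/-- The distribution of `n` i.i.d. samples from `μ`. -/
noncomputable def pmfPi {α : Type*} : (n : ℕ) → PMF α → PMF (Fin n → α)
  | 0, _ => PMF.pure (fun i => i.elim0)
  | n+1, μ => μ.bind fun b => (pmfPi n μ).bind fun g => PMF.pure (Fin.cons b g)

/-- Bernoulli distribution on `Bool` with success probability `1/(1+e^ε)`
(the flip probability of randomized response). -/
noncomputable def flipPMF (ε : ℝ) : PMF Bool :=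
  PMF.bernoulli (Real.toNNReal (1 / (1 + Real.exp ε)))
    (by
      rw [Real.toNNReal_le_one, div_le_one (by positivity)]
      nlinarith [Real.exp_pos ε])

/-- Given the flipped string `y`, output the selected set: if
`S = {i : y i = 1}` has at least `k` elements, a uniformly random `k`-subset of
`S`; otherwise `S` together with a uniformly random `(k−|S|)`-subset of its
complement.  (The selected indices are "ordered arbitrarily", so the output is
modeled as the set of `k` selected indices.) -/
noncomputable def rrSelect (n k : ℕ) (hk : k ≤ n) (y : Fin n → Bool) :
    PMF (Finset (Fin n)) :=
  if h : k ≤ (Finset.univ.filter fun i => y i = true).card then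
    PMF.uniformOfFinset ((Finset.univ.filter fun i => y i = true).powersetCard k)
      (Finset.powersetCard_nonempty.2 h)
  else
    (PMF.uniformOfFinset
        ((Finset.univ.filter fun i => y i = true)ᶜ.powersetCard
          (k - (Finset.univ.filter fun i => y i = true).card))
        (Finset.powersetCard_nonempty.2 (by
          rw [Finset.card_compl, Fintype.card_fin]; omega))).map
      fun T => (Finset.univ.filter fun i => y i = true) ∪ T

/-- The randomized-response selection mechanism `RR : {0,1}^n → [n]^k` with flip
probability `1/(1+e^ε)`: flip each bit of `x` independently with probability
`1/(1+e^ε)`, then select as in `rrSelect`. -/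
noncomputable def RR (n k : ℕ) (hk : k ≤ n) (ε : ℝ) (x : Fin n → Bool) :
    PMF (Finset (Fin n)) :=
  (pmfPi n (flipPMF ε)).bind fun f => rrSelect n k hk fun i => xor (x i) (f i)


/-! ### Auxiliary lemmas -/

lemma pmfPi_apply' {α : Type*} (n : ℕ) (μ : PMF α) (f : Fin n → α) :
    (pmfPi n μ) f = ∏ i, μ (f i) := by
  classical
  induction n with
  | zero =>
      have : f = fun i => i.elim0 := funext fun i => i.elim0
      subst this
      simp [pmfPi, PMF.pure_apply]
  | succ n ih =>
      rw [pmfPi, PMF.bind_apply]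
      have h1 : ∀ b : α, ((pmfPi n μ).bind fun g => PMF.pure (Fin.cons b g)) f
          = if b = f 0 then pmfPi n μ (Fin.tail f) else 0 := by
        intro b
        rw [PMF.bind_apply]
        by_cases hb : b = f 0
        · subst hb
          rw [if_pos rfl]
          refine (tsum_eq_single (Fin.tail f) ?_).trans ?_
          · intro g hg
            rw [PMF.pure_apply, if_neg, mul_zero]
            intro h
            apply hg
            have := congrArg Fin.tail h
            simpa using this.symm
          · rw [PMF.pure_apply, if_pos (Fin.cons_self_tail f).symm, mul_one]
        · rw [if_neg hb]
          refine ENNReal.tsum_eq_zero.2 fun g => ?_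
          rw [PMF.pure_apply, if_neg, mul_zero]
          intro h
          apply hb
          rw [h, Fin.cons_zero]
      simp_rw [h1]
      rw [tsum_eq_single (f 0) (by intro b hb; rw [if_neg hb, mul_zero]), if_pos rfl,
        ih, Fin.prod_univ_succ]
      rfl

lemma flip_ratio (ε : ℝ) (hε : 0 ≤ ε) (b : Bool) :
    flipPMF ε b ≤ ENNReal.ofReal (Real.exp ε) * flipPMF ε (!b) := by
  have hpos : (0:ℝ) < 1 + Real.exp ε := by positivity
  have hone : (1:ℝ) ≤ Real.exp ε := Real.one_le_exp hε
  have hsub : (1 : ENNReal) - ENNReal.ofReal (1 / (1 + Real.exp ε))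
      = ENNReal.ofReal (Real.exp ε / (1 + Real.exp ε)) := by
    rw [← ENNReal.ofReal_one, ← ENNReal.ofReal_sub _ (by positivity)]
    congr 1
    field_simp
    ring
  cases b with
  | true =>
      simp only [flipPMF, PMF.bernoulli_apply, Bool.not_true, Bool.cond_true, Bool.cond_false,
        ENNReal.coe_sub, ENNReal.coe_one]
      change ENNReal.ofReal (1 / (1 + Real.exp ε)) ≤ _ * (1 - ENNReal.ofReal (1 / (1 + Real.exp ε)))
      simp only [flipPMF, PMF.bernoulli_apply, Bool.not_true, Bool.cond_false, hsub]
      rw [← ENNReal.ofReal_mul (Real.exp_nonneg ε)]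
      apply ENNReal.ofReal_le_ofReal
      have h2 : 1 ≤ Real.exp ε * Real.exp ε := by nlinarith
      rw [mul_div_assoc']
      gcongr
  | false =>
      simp only [flipPMF, PMF.bernoulli_apply, Bool.not_false, Bool.cond_true, Bool.cond_false,
        ENNReal.coe_sub, ENNReal.coe_one]
      change (1 : ENNReal) - ENNReal.ofReal (1 / (1 + Real.exp ε)) ≤ _ * ENNReal.ofReal (1 / (1 + Real.exp ε))
      simp only [flipPMF, PMF.bernoulli_apply, Bool.not_false, Bool.cond_true, Bool.cond_false, hsub]
      rw [← ENNReal.ofReal_mul (Real.exp_nonneg ε)]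
      apply ENNReal.ofReal_le_ofReal
      rw [mul_one_div]

lemma pmfPi_flip_le (ε : ℝ) (hε : 0 ≤ ε) {n : ℕ} (i : Fin n) (f : Fin n → Bool) :
    pmfPi n (flipPMF ε) f
      ≤ ENNReal.ofReal (Real.exp ε)
        * pmfPi n (flipPMF ε) (Function.update f i (! f i)) := by
  rw [pmfPi_apply', pmfPi_apply']
  rw [← Finset.mul_prod_erase Finset.univ _ (Finset.mem_univ i),
    ← Finset.mul_prod_erase Finset.univ
      (fun j => flipPMF ε (Function.update f i (! f i) j)) (Finset.mem_univ i),
    ← mul_assoc]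
  apply mul_le_mul'
  · rw [Function.update_self]
    exact flip_ratio ε hε (f i)
  · apply Finset.prod_le_prod' fun j hj => ?_
    rw [Function.update_of_ne (Finset.ne_of_mem_erase hj)]

lemma bool_flip_eq {a b c : Bool} (h : a ≠ b) : xor a (!c) = xor b c := by
  cases a <;> cases b <;> cases c <;> simp_all


/-- For any `ε ≥ 0` and `1 ≤ k ≤ n`, the randomized-response
selection mechanism with flip probability `1/(1+e^ε)` is `(ε,0)`-differentially
private: for neighboring `x, x'` and any set `T` of outputs,
`Pr[RR(x) ∈ T] ≤ e^ε · Pr[RR(x') ∈ T]`. -/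
theorem stmt9 (ε : ℝ) (hε : 0 ≤ ε) (n k : ℕ) (hk1 : 1 ≤ k) (hkn : k ≤ n)
    (x x' : Fin n → Bool) (hxx' : Neighbors x x') (T : Set (Finset (Fin n))) :
    prob (RR n k hkn ε x) T ≤ Real.exp ε * prob (RR n k hkn ε x') T := by
  classical
  obtain ⟨i, hi, hj⟩ := hxx'
  set C : ENNReal := ENNReal.ofReal (Real.exp ε) with hC
  set P : PMF (Fin n → Bool) := pmfPi n (flipPMF ε) with hP
  set F : (Fin n → Bool) → ENNReal :=
    fun y => (rrSelect n k hkn y).toOuterMeasure T with hF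
  have hflip : Function.Involutive
      fun f : Fin n → Bool => Function.update f i (!f i) := by
    intro f
    funext j
    by_cases hji : j = i
    · subst hji; simp [Function.update_self]
    · simp [Function.update_of_ne hji]
  let e : (Fin n → Bool) ≃ (Fin n → Bool) := hflip.toPerm
  have hRRx : (RR n k hkn ε x).toOuterMeasure T
      = ∑' f, P f * F (fun j => xor (x j) (f j)) :=
    PMF.toOuterMeasure_bind_apply _ _ _
  have hRRx' : (RR n k hkn ε x').toOuterMeasure T
      = ∑' f, P f * F (fun j => xor (x' j) (f j)) :=
    PMF.toOuterMeasure_bind_apply _ _ _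
  have hle1 : ∀ {α : Type} (μ : PMF α) (s : Set α), μ.toOuterMeasure s ≤ 1 := by
    intro α μ s
    rw [PMF.toOuterMeasure_apply]
    calc ∑' a, s.indicator μ a ≤ ∑' a, μ a :=
          ENNReal.tsum_le_tsum fun a => Set.indicator_le_self s μ a
      _ = 1 := μ.tsum_coe
  have key : (∑' f, P f * F (fun j => xor (x j) (f j)))
      ≤ C * ∑' f, P f * F (fun j => xor (x' j) (f j)) := by
    rw [← Equiv.tsum_eq e (fun f => P f * F (fun j => xor (x j) (f j))),
      ← ENNReal.tsum_mul_left]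
    apply ENNReal.tsum_le_tsum
    intro f
    have hef : e f = Function.update f i (!f i) := rfl
    have harg : (fun j => xor (x j) (e f j)) = fun j => xor (x' j) (f j) := by
      funext j
      rw [hef]
      by_cases hji : j = i
      · subst hji
        rw [Function.update_self]
        exact bool_flip_eq hi
      · rw [Function.update_of_ne hji, hj j hji]
    have h := pmfPi_flip_le ε hε i (Function.update f i (!f i))
    rw [show Function.update (Function.update f i (!f i)) i
        (!Function.update f i (!f i) i) = f from hflip f] at h
    rw [harg, hef, ← mul_assoc]
    exact mul_le_mul' h le_rfl
  have hB_le : (∑' f, P f * F (fun j => xor (x' j) (f j))) ≤ 1 := by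
    rw [← hRRx']; exact hle1 _ _
  have hfin : C * (∑' f, P f * F (fun j => xor (x' j) (f j))) ≠ ⊤ :=
    ENNReal.mul_ne_top ENNReal.ofReal_ne_top (ne_top_of_le_ne_top ENNReal.one_ne_top hB_le)
  rw [prob, prob, hRRx, hRRx']
  calc (∑' f, P f * F (fun j => xor (x j) (f j))).toReal
      ≤ (C * ∑' f, P f * F (fun j => xor (x' j) (f j))).toReal :=
        ENNReal.toReal_mono hfin key
    _ = Real.exp ε * (∑' f, P f * F (fun j => xor (x' j) (f j))).toReal := by
        rw [ENNReal.toReal_mul, hC, ENNReal.toReal_ofReal (Real.exp_nonneg ε)]
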